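/- For every fixed K > 0, the function F(n) = cosh((n+1)K) − 2^{n/2} (cosh K)^{n+1} of a real variable n satisfies F(0) = 0 and lim_{n→0} F(n)/n = K sinh K − cosh K·((log 2)/2 + log cosh K). Consequently, this limit vanishes if and only if −p log p − (1−p) log(1−p) = (log 2)/2, where p = e^K/(e^K + e^{-K}). -/

import Mathlib

open Real Filter Topology

/-- Nishimori-line probability `p = e^K / (e^K + e^{-K})`. -/
noncomputable def nlProb (K : ℝ) : ℝ := exp K / (exp K + exp (-K))

/-- `F(n) = cosh((n+1)K) - 2^{n/2} (cosh K)^{n+1}` as a function of a *real*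
replica number `n` (real powers), for fixed `K`. -/
noncomputable def Ffun (K n : ℝ) : ℝ :=
  cosh ((n + 1) * K) - (2 : ℝ) ^ (n / 2) * (cosh K) ^ (n + 1)

lemma Ffun_zero (K : ℝ) : Ffun K 0 = 0 := by
  simp [Ffun]

lemma Ffun_hasDerivAt (K : ℝ) :
    HasDerivAt (Ffun K)
      (K * sinh K - cosh K * (log 2 / 2 + log (cosh K))) 0 := by
  have hc : 0 < cosh K := Real.cosh_pos K
  have h1 : HasDerivAt (fun n : ℝ => Real.cosh ((n + 1) * K)) (Real.sinh K * K) 0 := by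
    have hlin : HasDerivAt (fun n : ℝ => (n + 1) * K) K 0 := by
      simpa using ((hasDerivAt_id (0:ℝ)).add_const 1).mul_const K
    have := (Real.hasDerivAt_cosh ((0 + 1) * K)).comp 0 hlin
    simpa [Function.comp_def] using this
  have h2 : HasDerivAt (fun n : ℝ => (2 : ℝ) ^ (n / 2)) (log 2 / 2) 0 := by
    have hlin : HasDerivAt (fun n : ℝ => n / 2) (1 / 2) 0 := (hasDerivAt_id 0).div_const 2
    have := ((Real.hasStrictDerivAt_const_rpow (by norm_num : (0:ℝ) < 2)
      ((0:ℝ) / 2)).hasDerivAt.comp 0 hlin)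
    simpa [Real.rpow_zero, Function.comp_def] using this.congr_deriv (by ring)
  have h3 : HasDerivAt (fun n : ℝ => (Real.cosh K) ^ (n + 1)) (cosh K * log (cosh K)) 0 := by
    have hlin : HasDerivAt (fun n : ℝ => n + 1) 1 0 := (hasDerivAt_id 0).add_const 1
    have h3' := ((Real.hasStrictDerivAt_const_rpow hc ((0:ℝ) + 1)).hasDerivAt.comp 0 hlin)
    refine h3'.congr_deriv ?_
    rw [zero_add, Real.rpow_one]; ring
  have hprod := h2.mul h3
  have := h1.sub hprod
  simp only [Real.rpow_zero, Real.rpow_one, zero_div, zero_add] at this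
  exact this.congr_deriv (by ring)

/-- The replica limit `n → 0` of the fixed-point condition: for fixed `K > 0`,
`F(0) = 0`, `F(n)/n → K sinh K - cosh K ((log 2)/2 + log cosh K)` as `n → 0`, and
this limit vanishes iff `-p log p - (1-p) log(1-p) = (log 2)/2` with
`p = e^K/(e^K + e^{-K})` (Conjecture 2 of the paper). -/
theorem replica_limit (K : ℝ) (hK : 0 < K) :
    Ffun K 0 = 0 ∧
    Tendsto (fun n : ℝ => Ffun K n / n) (𝓝[≠] 0)
      (𝓝 (K * sinh K - cosh K * (log 2 / 2 + log (cosh K)))) ∧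
    (K * sinh K - cosh K * (log 2 / 2 + log (cosh K)) = 0 ↔
      -nlProb K * log (nlProb K) - (1 - nlProb K) * log (1 - nlProb K) = log 2 / 2) := by
  have hc : 0 < cosh K := Real.cosh_pos K
  refine ⟨Ffun_zero K, ?_, ?_⟩
  · have h := (Ffun_hasDerivAt K)
    have := hasDerivAt_iff_tendsto_slope.mp h
    refine this.congr (fun n => ?_)
    simp [slope, Ffun_zero, div_eq_inv_mul]
  · -- entropy computation
    have hs : exp K + exp (-K) = 2 * cosh K := by
      rw [Real.cosh_eq]; ring
    have hspos : 0 < exp K + exp (-K) := by positivity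
    have hlogs : log (exp K + exp (-K)) = log 2 + log (cosh K) := by
      rw [hs, Real.log_mul (by norm_num) hc.ne']
    have hp1 : 1 - nlProb K = exp (-K) / (exp K + exp (-K)) := by
      unfold nlProb
      field_simp
      ring
    have hlogp : log (nlProb K) = K - (log 2 + log (cosh K)) := by
      unfold nlProb
      rw [Real.log_div (Real.exp_ne_zero K) hspos.ne', Real.log_exp, hlogs]
    have hlogq : log (1 - nlProb K) = -K - (log 2 + log (cosh K)) := by
      rw [hp1, Real.log_div (Real.exp_ne_zero _) hspos.ne', Real.log_exp, hlogs]
    have hE : -nlProb K * log (nlProb K) - (1 - nlProb K) * log (1 - nlProb K)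
        = log 2 + log (cosh K) - K * sinh K / cosh K := by
      rw [hlogp, hlogq, hp1]
      unfold nlProb
      rw [hs, Real.sinh_eq]
      field_simp
      linear_combination (log 2 + log (cosh K)) * hs
    rw [hE]
    constructor
    · intro h
      have : K * sinh K = cosh K * (log 2 / 2 + log (cosh K)) := by linarith
      rw [this]
      field_simp
      ring
    · intro h
      have h2 : K * sinh K / cosh K = log 2 / 2 + log (cosh K) := by linarith
      have := (div_eq_iff hc.ne').mp h2
      linarith [this]
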